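/- A finite group G is cyclic if and only if its subgroup lattice is distributive. -/

import Mathlib

open Subgroup Finset

private lemma aux_pow_ncard {G : Type*} [Group G] {H : Subgroup G} {x : G} (hx : x ∈ H) :
    x ^ Nat.card H = 1 := by
  have : (⟨x, hx⟩ : H) ^ Nat.card H = 1 := pow_card_eq_one'
  have h2 := congrArg Subtype.val this
  simp only [SubmonoidClass.coe_pow, OneMemClass.coe_one] at h2
  exact h2

private lemma aux_mem_iff_pow_card {G : Type*} [Group G] [Fintype G] [IsCyclic G]
    (H : Subgroup G) (x : G) : x ∈ H ↔ x ^ Nat.card H = 1 := by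
  classical
  constructor
  · exact aux_pow_ncard
  · intro hx
    have hd : 0 < Nat.card H := Nat.card_pos
    have hle : #(Finset.univ.filter fun a : G => a ^ Nat.card H = 1) ≤ Nat.card H :=
      IsCyclic.card_pow_eq_one_le hd
    have hsub : (H : Set G).toFinset ⊆ Finset.univ.filter fun a : G => a ^ Nat.card H = 1 := by
      intro y hy
      simp only [Set.mem_toFinset, SetLike.mem_coe] at hy
      simp only [Finset.mem_filter, Finset.mem_univ, true_and]
      exact aux_pow_ncard hy
    have hcard : (H : Set G).toFinset.card = Nat.card H := by
      rw [Set.toFinset_card]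
      simp [Nat.card_eq_fintype_card]
    have heq : (H : Set G).toFinset = Finset.univ.filter fun a : G => a ^ Nat.card H = 1 :=
      Finset.eq_of_subset_of_card_le hsub (by rw [hcard]; exact hle)
    have : x ∈ (H : Set G).toFinset := by
      rw [heq]
      simp only [Finset.mem_filter, Finset.mem_univ, true_and]
      exact hx
    simpa using this

private lemma aux_dvd_lcm_gcd {d a b c : ℕ} (ha : a ≠ 0) (hb : b ≠ 0) (hc : c ≠ 0)
    (hda : d ∣ a) (hdbc : d ∣ Nat.lcm b c) :
    d ∣ Nat.lcm (Nat.gcd a b) (Nat.gcd a c) := by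
  have hd : d ≠ 0 := fun h => ha (by simpa [h] using hda)
  have hab : Nat.gcd a b ≠ 0 := fun h => ha (Nat.eq_zero_of_gcd_eq_zero_left h)
  have hac : Nat.gcd a c ≠ 0 := fun h => ha (Nat.eq_zero_of_gcd_eq_zero_left h)
  have hbc : Nat.lcm b c ≠ 0 := Nat.lcm_ne_zero hb hc
  rw [← Nat.factorization_le_iff_dvd hd (Nat.lcm_ne_zero hab hac),
    Nat.factorization_lcm hab hac, Nat.factorization_gcd ha hb, Nat.factorization_gcd ha hc]
  have h1 := (Nat.factorization_le_iff_dvd hd ha).mpr hda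
  have h2 := (Nat.factorization_le_iff_dvd hd hbc).mpr hdbc
  rw [Nat.factorization_lcm hb hc] at h2
  intro p
  have h1p := h1 p
  have h2p := h2 p
  simp only [Finsupp.inf_apply, Finsupp.sup_apply] at *
  rw [← inf_sup_left]
  exact le_inf h1p h2p

private lemma aux_exists_card {G : Type*} [Group G] [Fintype G] [IsCyclic G]
    {m : ℕ} (hm : m ∣ Nat.card G) : ∃ W : Subgroup G, Nat.card W = m := by
  obtain ⟨g, hg⟩ := IsCyclic.exists_generator (α := G)
  have hord : orderOf g = Nat.card G := orderOf_eq_card_of_forall_mem_zpowers hg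
  have hord0 : orderOf g ≠ 0 := by
    rw [hord]; exact Nat.card_pos.ne'
  refine ⟨Subgroup.zpowers (g ^ (orderOf g / m)), ?_⟩
  rw [Nat.card_zpowers]
  exact orderOf_pow_orderOf_div hord0 (hord ▸ hm)
private lemma aux_gcd_dvd_inf {G : Type*} [Group G] [Fintype G] [IsCyclic G]
    (a b : Subgroup G) :
    Nat.gcd (Nat.card a) (Nat.card b) ∣ Nat.card (a ⊓ b : Subgroup G) := by
  obtain ⟨W, hW⟩ := aux_exists_card (G := G)
    ((Nat.gcd_dvd_left (Nat.card a) (Nat.card b)).trans (Subgroup.card_subgroup_dvd_card a))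
  have hle : ∀ (c : Subgroup G), Nat.gcd (Nat.card a) (Nat.card b) ∣ Nat.card c → W ≤ c := by
    intro c hdvd y hy
    rw [aux_mem_iff_pow_card]
    rw [← orderOf_dvd_iff_pow_eq_one]
    exact (orderOf_dvd_of_pow_eq_one (aux_pow_ncard hy)).trans (hW ▸ hdvd)
  have : W ≤ a ⊓ b :=
    le_inf (hle a (Nat.gcd_dvd_left _ _)) (hle b (Nat.gcd_dvd_right _ _))
  exact hW ▸ Subgroup.card_dvd_of_le this
private lemma aux_pow_lcm_sup {G : Type*} [Group G] [Fintype G] [IsCyclic G]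
    {b c : Subgroup G} {x : G} (hx : x ∈ b ⊔ c) :
    x ^ Nat.lcm (Nat.card b) (Nat.card c) = 1 := by
  have hcomm : ∀ u v : G, Commute u v := by
    obtain ⟨g, hg⟩ := IsCyclic.exists_generator (α := G)
    intro u v
    obtain ⟨m, rfl⟩ := hg u
    obtain ⟨n, rfl⟩ := hg v
    exact Commute.zpow_zpow_self g m n
  rw [Subgroup.sup_eq_closure] at hx
  refine Subgroup.closure_induction ?_ (one_pow _) ?_ ?_ hx
  · rintro y (hy | hy) <;>
    · rw [← orderOf_dvd_iff_pow_eq_one]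
      refine (orderOf_dvd_of_pow_eq_one (aux_pow_ncard hy)).trans ?_
      first
        | exact Nat.dvd_lcm_left _ _
        | exact Nat.dvd_lcm_right _ _
  · intro u v _ _ hu hv
    rw [(hcomm u v).mul_pow, hu, hv, one_mul]
  · intro u _ hu
    rw [inv_pow, hu, inv_one]

private lemma aux_prime_bound {G : Type*} [Group G] [Fintype G] [DecidableEq G]
    (h : ∀ a b c : Subgroup G, a ⊓ (b ⊔ c) = (a ⊓ b) ⊔ (a ⊓ c))
    (hcomm : ∀ x y : G, x * y = y * x)
    {p : ℕ} (hp : p.Prime) :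
    #(Finset.univ.filter fun x : G => x ^ p = 1) ≤ p := by
  classical
  by_contra hgt
  push_neg at hgt
  set S := Finset.univ.filter fun x : G => x ^ p = 1 with hS
  -- a nonidentity element of S
  obtain ⟨x, hxS, hx1⟩ := Finset.exists_mem_ne (hp.one_lt.trans hgt) 1
  have hxp : x ^ p = 1 := (Finset.mem_filter.mp hxS).2
  have hordx : orderOf x = p :=
    ((Nat.dvd_prime hp).mp (orderOf_dvd_of_pow_eq_one hxp)).resolve_left
      (fun h1 => hx1 (orderOf_eq_one_iff.mp h1))
  set A := Subgroup.zpowers x with hA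
  have hcardA : Nat.card A = p := by rw [hA, Nat.card_zpowers, hordx]
  -- every order-p-killed subgroup sits inside S
  have hsubS : ∀ D : Subgroup G, Nat.card D = p → (D : Set G).toFinset ⊆ S := by
    intro D hD z hz
    simp only [Set.mem_toFinset, SetLike.mem_coe] at hz
    simp only [hS, Finset.mem_filter, Finset.mem_univ, true_and]
    have := aux_pow_ncard hz
    rwa [hD] at this
  -- find y ∈ S outside A
  have hnots : ¬ S ⊆ (A : Set G).toFinset := by
    intro hsub
    have := Finset.card_le_card hsub
    have hAc : ((A : Set G).toFinset).card = p := by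
      rw [Set.toFinset_card, ← Nat.card_eq_fintype_card]
      exact hcardA
    omega
  obtain ⟨y, hyS, hyA'⟩ := Finset.not_subset.mp hnots
  have hyA : y ∉ A := fun hy => hyA' (by simp [Set.mem_toFinset, hy])
  have hyp : y ^ p = 1 := (Finset.mem_filter.mp hyS).2
  have hy1 : y ≠ 1 := fun hy => hyA (hy ▸ (Subgroup.zpowers x).one_mem)
  have hordy : orderOf y = p :=
    ((Nat.dvd_prime hp).mp (orderOf_dvd_of_pow_eq_one hyp)).resolve_left
      (fun h1 => hy1 (orderOf_eq_one_iff.mp h1))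
  set B := Subgroup.zpowers y with hB
  have hcardB : Nat.card B = p := by rw [hB, Nat.card_zpowers, hordy]
  have hxyne : x * y ≠ 1 := by
    intro hxy
    have hyx : y = x⁻¹ := eq_inv_of_mul_eq_one_right hxy
    exact hyA (hyx ▸ Subgroup.inv_mem _ (Subgroup.mem_zpowers x))
  have hxyp : (x * y) ^ p = 1 := by
    rw [(show Commute x y from hcomm x y).mul_pow, hxp, hyp, one_mul]
  have hordxy : orderOf (x * y) = p :=
    ((Nat.dvd_prime hp).mp (orderOf_dvd_of_pow_eq_one hxyp)).resolve_left
      (fun h1 => hxyne (orderOf_eq_one_iff.mp h1))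
  set C := Subgroup.zpowers (x * y) with hC
  have hcardC : Nat.card C = p := by rw [hC, Nat.card_zpowers, hordxy]
  -- distinct order-p subgroups intersect trivially
  have key : ∀ D E : Subgroup G, Nat.card D = p → Nat.card E = p → D ≠ E → D ⊓ E = ⊥ := by
    intro D E hD hE hne
    have hdvd : Nat.card (D ⊓ E : Subgroup G) ∣ p :=
      hD ▸ Subgroup.card_dvd_of_le inf_le_left
    rcases (Nat.dvd_prime hp).mp hdvd with h1 | hpp
    · exact Subgroup.card_eq_one.mp h1
    · exfalso
      have hDE : D ⊓ E = D :=
        Subgroup.eq_of_le_of_card_ge inf_le_left (by rw [hD, hpp])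
      have hle : D ≤ E := hDE ▸ inf_le_right
      exact hne (Subgroup.eq_of_le_of_card_ge hle (by rw [hD, hE]))
  have hAB : A ≠ B := fun hAB => hyA (hAB ▸ Subgroup.mem_zpowers y)
  have hCA : C ≠ A := by
    intro hCA
    exact hyA (by
      have hxyA : x * y ∈ A := hCA ▸ Subgroup.mem_zpowers (x * y)
      have : x⁻¹ * (x * y) ∈ A :=
        Subgroup.mul_mem _ (Subgroup.inv_mem _ (Subgroup.mem_zpowers x)) hxyA
      simpa using this)
  have hCB : C ≠ B := by
    intro hCB
    have hxyB : x * y ∈ B := hCB ▸ Subgroup.mem_zpowers (x * y)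
    have hxB : x ∈ B := by
      have : (x * y) * y⁻¹ ∈ B :=
        Subgroup.mul_mem _ hxyB (Subgroup.inv_mem _ (Subgroup.mem_zpowers y))
      simpa using this
    have hABle : A ≤ B := by rw [hA]; exact Subgroup.zpowers_le.mpr hxB
    exact hAB (Subgroup.eq_of_le_of_card_ge hABle (by rw [hcardA, hcardB]))
  have hCle : C ≤ A ⊔ B :=
    Subgroup.zpowers_le.mpr
      (Subgroup.mul_mem_sup (Subgroup.mem_zpowers x) (Subgroup.mem_zpowers y))
  have : C = ⊥ := by
    have h1 : C = C ⊓ (A ⊔ B) := (inf_eq_left.mpr hCle).symm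
    rw [h1, h C A B, key C A hcardC hcardA hCA, key C B hcardC hcardB hCB, bot_sup_eq]
  exact hxyne (Subgroup.zpowers_eq_bot.mp this)
private lemma aux_pp_bound {G : Type*} [Group G] [Fintype G] [DecidableEq G]
    (hcomm : ∀ x y : G, x * y = y * x)
    {p : ℕ} (hp : p.Prime)
    (hpb : #(Finset.univ.filter fun x : G => x ^ p = 1) ≤ p) :
    ∀ k : ℕ, #(Finset.univ.filter fun x : G => x ^ p ^ k = 1) ≤ p ^ k := by
  intro k
  induction k with
  | zero =>
    simp only [pow_zero, pow_one]
    rw [Finset.filter_eq' Finset.univ 1]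
    simp
  | succ k ih =>
    set S := Finset.univ.filter fun x : G => x ^ p ^ (k + 1) = 1 with hSdef
    set T := Finset.univ.filter fun x : G => x ^ p ^ k = 1 with hTdef
    have hmaps : ∀ x ∈ S, x ^ p ∈ T := by
      intro x hx
      simp only [hSdef, hTdef, Finset.mem_filter, Finset.mem_univ, true_and] at hx ⊢
      rw [← pow_mul]
      rwa [pow_succ'] at hx
    have hfib : ∀ a ∈ S.image (fun x : G => x ^ p), #(S.filter fun x => x ^ p = a) ≤ p := by
      intro a ha
      rcases Finset.eq_empty_or_nonempty (S.filter fun x => x ^ p = a) with he | ⟨x₀, hx₀⟩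
      · rw [he]; simp [hp.pos.le]
      · have hx₀a : x₀ ^ p = a := (Finset.mem_filter.mp hx₀).2
        refine Finset.card_le_card_of_injOn (fun x => x * x₀⁻¹) ?_ ?_ |>.trans hpb
        · intro x hx
          have hxa : x ^ p = a := (Finset.mem_filter.mp hx).2
          simp only [Finset.mem_coe, Finset.mem_filter, Finset.mem_univ, true_and]
          rw [(show Commute x x₀⁻¹ from (Commute.inv_right (hcomm x x₀))).mul_pow,
            inv_pow, hxa, hx₀a, mul_inv_cancel]
        · intro u _ v _ huv
          exact mul_right_cancel huv
    have h1 : #S ≤ p * #(S.image fun x : G => x ^ p) :=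
      Finset.card_le_mul_card_image S p hfib
    have h2 : (S.image fun x : G => x ^ p) ⊆ T := by
      intro a ha
      obtain ⟨x, hx, rfl⟩ := Finset.mem_image.mp ha
      exact hmaps x hx
    calc #S ≤ p * #(S.image fun x : G => x ^ p) := h1
      _ ≤ p * #T := Nat.mul_le_mul_left p (Finset.card_le_card h2)
      _ ≤ p * p ^ k := Nat.mul_le_mul_left p ih
      _ = p ^ (k + 1) := (pow_succ' p k).symm
private lemma aux_all_bound {G : Type*} [Group G] [Fintype G] [DecidableEq G]
    (hcomm : ∀ x y : G, x * y = y * x)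
    (hpb : ∀ p : ℕ, p.Prime → #(Finset.univ.filter fun x : G => x ^ p = 1) ≤ p) :
    ∀ n : ℕ, 0 < n → #(Finset.univ.filter fun x : G => x ^ n = 1) ≤ n := by
  intro n
  induction n using Nat.recOnPosPrimePosCoprime with
  | prime_pow p k hpp hk =>
    exact fun _ => aux_pp_bound hcomm hpp (hpb p hpp) k
  | zero => exact fun h0 => absurd h0 (lt_irrefl 0)
  | one =>
    intro _
    simp only [pow_one]
    rw [Finset.filter_eq' Finset.univ 1]
    simp
  | coprime a b ha hb hab iha ihb =>
    intro _
    have ha0 : 0 < a := by omega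
    have hb0 : 0 < b := by omega
    -- Bezout
    have hg : Nat.gcd a b = 1 := hab
    have hbez : (a : ℤ) * Nat.gcdA a b + (b : ℤ) * Nat.gcdB a b = 1 := by
      have := Nat.gcd_eq_gcd_ab a b
      rw [hg] at this
      exact_mod_cast this.symm
    set s : ℤ := Nat.gcdA a b
    set t : ℤ := Nat.gcdB a b
    set f : G → G × G := fun z => (z ^ ((b : ℤ) * t), z ^ ((a : ℤ) * s)) with hf
    have hrecon : ∀ z : G, (f z).1 * (f z).2 = z := by
      intro z
      simp only [hf]
      rw [← zpow_add]
      have : (b : ℤ) * t + (a : ℤ) * s = 1 := by linarith [hbez]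
      rw [this, zpow_one]
    have hinj : Set.InjOn f (Finset.univ.filter fun x : G => x ^ (a * b) = 1) := by
      intro u _ v _ huv
      rw [← hrecon u, ← hrecon v, huv]
    have hmaps : ∀ z ∈ (Finset.univ.filter fun x : G => x ^ (a * b) = 1),
        f z ∈ (Finset.univ.filter fun x : G => x ^ a = 1) ×ˢ
          (Finset.univ.filter fun x : G => x ^ b = 1) := by
      intro z hz
      simp only [Finset.mem_filter, Finset.mem_univ, true_and] at hz
      have hz' : z ^ ((a : ℤ) * (b : ℤ)) = 1 := by
        rw [← zpow_natCast z (a * b)] at hz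
        push_cast at hz ⊢
        exact hz
      simp only [Finset.mem_product, Finset.mem_filter, Finset.mem_univ, true_and, hf]
      constructor
      · rw [← zpow_natCast, ← zpow_mul]
        have : (b : ℤ) * t * (a : ℤ) = (a : ℤ) * (b : ℤ) * t := by ring
        rw [this, zpow_mul, hz', one_zpow]
      · rw [← zpow_natCast, ← zpow_mul]
        have : (a : ℤ) * s * (b : ℤ) = (a : ℤ) * (b : ℤ) * s := by ring
        rw [this, zpow_mul, hz', one_zpow]
    calc #(Finset.univ.filter fun x : G => x ^ (a * b) = 1)
        ≤ #((Finset.univ.filter fun x : G => x ^ a = 1) ×ˢ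
            (Finset.univ.filter fun x : G => x ^ b = 1)) :=
          Finset.card_le_card_of_injOn f hmaps hinj
      _ = #(Finset.univ.filter fun x : G => x ^ a = 1) *
            #(Finset.univ.filter fun x : G => x ^ b = 1) := Finset.card_product _ _
      _ ≤ a * b := Nat.mul_le_mul (iha ha0) (ihb hb0)

private lemma aux_comm {G : Type*} [Group G]
    (h : ∀ a b c : Subgroup G, a ⊓ (b ⊔ c) = (a ⊓ b) ⊔ (a ⊓ c))
    (x y : G) : x * y = y * x := by
  set A := Subgroup.zpowers x with hA
  set B := Subgroup.zpowers y with hB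
  set C := Subgroup.zpowers (x * y) with hC
  have h1 : A ⊔ C = A ⊔ B := by
    apply le_antisymm
    · apply sup_le
      · exact le_sup_left
      · exact Subgroup.zpowers_le.mpr
          (Subgroup.mul_mem_sup (Subgroup.mem_zpowers x) (Subgroup.mem_zpowers y))
    · apply sup_le
      · exact le_sup_left
      · refine Subgroup.zpowers_le.mpr ?_
        have hmem : x⁻¹ * (x * y) ∈ A ⊔ C :=
          Subgroup.mul_mem _
            (Subgroup.inv_mem _ (Subgroup.mem_sup_left (Subgroup.mem_zpowers x)))
            (Subgroup.mem_sup_right (Subgroup.mem_zpowers (x * y)))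
        simpa using hmem
  have h2 : B ⊔ C = A ⊔ B := by
    apply le_antisymm
    · apply sup_le
      · exact le_sup_right
      · exact Subgroup.zpowers_le.mpr
          (Subgroup.mul_mem_sup (Subgroup.mem_zpowers x) (Subgroup.mem_zpowers y))
    · apply sup_le
      · refine Subgroup.zpowers_le.mpr ?_
        have hmem : (x * y) * y⁻¹ ∈ B ⊔ C :=
          Subgroup.mul_mem _
            (Subgroup.mem_sup_right (Subgroup.mem_zpowers (x * y)))
            (Subgroup.inv_mem _ (Subgroup.mem_sup_left (Subgroup.mem_zpowers y)))
        simpa using hmem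
      · exact le_sup_left
  have hup : A ⊔ B ≤ (A ⊓ B) ⊔ C := by
    calc A ⊔ B = (B ⊔ C) ⊓ (A ⊔ C) := by rw [h1, h2, inf_idem]
      _ = ((B ⊔ C) ⊓ A) ⊔ ((B ⊔ C) ⊓ C) := h (B ⊔ C) A C
      _ = (A ⊓ (B ⊔ C)) ⊔ C := by
          rw [inf_comm (B ⊔ C) A, inf_eq_right.mpr (le_sup_right : C ≤ B ⊔ C)]
      _ = ((A ⊓ B) ⊔ (A ⊓ C)) ⊔ C := by rw [h A B C]
      _ ≤ (A ⊓ B) ⊔ C :=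
          sup_le (sup_le le_sup_left (le_trans inf_le_right le_sup_right)) le_sup_right
  set S : Set G := ((A ⊓ B : Subgroup G) : Set G) ∪ (C : Set G) with hSdef
  have hclosure : (A ⊓ B) ⊔ C = Subgroup.closure S := Subgroup.sup_eq_closure _ _
  have hS : ∀ u ∈ S, ∀ v ∈ S, u * v = v * u := by
    intro u hu v hv
    simp only [hSdef, Set.mem_union, SetLike.mem_coe, Subgroup.mem_inf] at hu hv
    rcases hu with ⟨hu1, hu2⟩ | hu
    · have c1 : Commute u x := by
        obtain ⟨m, hm⟩ := hu1; rw [← hm]; exact Commute.zpow_self x m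
      have c2 : Commute u y := by
        obtain ⟨m, hm⟩ := hu2; rw [← hm]; exact Commute.zpow_self y m
      rcases hv with ⟨hv1, _⟩ | hv
      · obtain ⟨n, hn⟩ := hv1
        rw [← hn]
        exact c1.zpow_right n
      · obtain ⟨n, hn⟩ := hv
        rw [← hn]
        exact (c1.mul_right c2).zpow_right n
    · rcases hv with ⟨hv1, hv2⟩ | hv
      · have c1 : Commute v x := by
          obtain ⟨m, hm⟩ := hv1; rw [← hm]; exact Commute.zpow_self x m
        have c2 : Commute v y := by
          obtain ⟨m, hm⟩ := hv2; rw [← hm]; exact Commute.zpow_self y m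
        obtain ⟨n, hn⟩ := hu
        rw [← hn]
        exact ((c1.mul_right c2).zpow_right n).symm
      · obtain ⟨m, hm⟩ := hu
        obtain ⟨n, hn⟩ := hv
        rw [← hm, ← hn]
        exact Commute.zpow_zpow_self (x * y) m n
  have hcc := Subgroup.closure_le_centralizer_centralizer S
  have hx' : x ∈ Subgroup.closure S := by
    rw [← hclosure]
    exact hup (Subgroup.mem_sup_left (Subgroup.mem_zpowers x))
  have hy' : y ∈ Subgroup.closure S := by
    rw [← hclosure]
    exact hup (Subgroup.mem_sup_right (Subgroup.mem_zpowers y))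
  exact Set.centralizer_centralizer_comm_of_comm hS x (hcc hx') y (hcc hy')

/-- A finite group is cyclic if and only if its subgroup lattice is distributive. -/
theorem isCyclic_iff_subgroup_lattice_distributive (G : Type*) [Group G] [Fintype G] :
    IsCyclic G ↔
      ∀ a b c : Subgroup G, a ⊓ (b ⊔ c) = (a ⊓ b) ⊔ (a ⊓ c) := by
  constructor
  · intro hcyc a b c
    refine le_antisymm ?_ le_inf_sup
    intro x hx
    rw [Subgroup.mem_inf] at hx
    obtain ⟨hxa, hxbc⟩ := hx
    rw [aux_mem_iff_pow_card, ← orderOf_dvd_iff_pow_eq_one]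
    have h1 : orderOf x ∣ Nat.card a :=
      orderOf_dvd_of_pow_eq_one ((aux_mem_iff_pow_card a x).mp hxa)
    have h2 : orderOf x ∣ Nat.lcm (Nat.card b) (Nat.card c) :=
      orderOf_dvd_of_pow_eq_one (aux_pow_lcm_sup hxbc)
    have key := aux_dvd_lcm_gcd (Nat.card_pos (α := a)).ne' (Nat.card_pos (α := b)).ne'
      (Nat.card_pos (α := c)).ne' h1 h2
    refine key.trans (Nat.lcm_dvd ?_ ?_)
    · exact (aux_gcd_dvd_inf a b).trans (Subgroup.card_dvd_of_le le_sup_left)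
    · exact (aux_gcd_dvd_inf a c).trans (Subgroup.card_dvd_of_le le_sup_right)
  · intro h
    classical
    have hcomm : ∀ x y : G, x * y = y * x := aux_comm h
    exact isCyclic_of_card_pow_eq_one_le
      (fun n hn => aux_all_bound hcomm (fun p hp => aux_prime_bound h hcomm hp) n hn)
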